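/- Let W be the hyperoctahedral group of signed permutations of {±1,...,±n} (bijections w with w(−i) = −w(i)) and W_P ≅ S_n the parabolic subgroup of elements with w(i) > 0 for all i > 0. Then u ≤_P w if and only if u(i) ≥ w(i) for all 1 ≤ i ≤ n. -/

import Mathlib

/-!
STATEMENT 4: Let `W` be the hyperoctahedral group of signed permutations of `{±1,…,±n}`
(bijections `w` of `ℤ` with `w(-i) = -w(i)`, supported on `{±1,…,±n}`) and `W_P ≅ S_n`
the parabolic subgroup of elements with `w(i) > 0` for all `i > 0`.  Then
`u ≤_P w ↔ u(i) ≥ w(i)` for all `1 ≤ i ≤ n`.  Here `≤_P` is the extended `P`-Bruhat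
order: the transitive closure of `u →_P u·s_α` for positive roots `α` outside the positive
system of `W_P`, i.e. `α = e_i + e_j` (`i < j`) or the (co)root at `i`, with length
increasing; the reflection `s_{e_i+e_j}` swaps `i ↔ -j, j ↔ -i`, and `s_i` swaps `i ↔ -i`.
-/

open Equiv

/-- `w` is a signed permutation of `{±1, …, ±n}`: an element of the hyperoctahedral group. -/
def IsSigned (n : ℕ) (w : Perm ℤ) : Prop :=
  (∀ i : ℤ, w (-i) = - w i) ∧ (∀ i : ℤ, (n : ℤ) < |i| → w i = i)

/-- The type B/C length of a signed permutation:
`ℓ(w) = #{1 ≤ i < j ≤ n : w(i) > w(j)} + #{1 ≤ i ≤ j ≤ n : w(i) + w(j) < 0}`. -/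
noncomputable def lenB (n : ℕ) (w : Perm ℤ) : ℕ :=
  ((Finset.Icc (1 : ℤ) n ×ˢ Finset.Icc (1 : ℤ) n).filter
      (fun p => p.1 < p.2 ∧ w p.2 < w p.1)).card +
  ((Finset.Icc (1 : ℤ) n ×ˢ Finset.Icc (1 : ℤ) n).filter
      (fun p => p.1 ≤ p.2 ∧ w p.1 + w p.2 < 0)).card

/-- One step of the extended `P`-Bruhat order: `w = u·s_α` with `α` a positive root
outside the positive system of `W_P` (namely `α = e_i + e_j` with `1 ≤ i < j ≤ n`, or the
root at `i` with `1 ≤ i ≤ n`), such that `ℓ(w) > ℓ(u)`. -/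
def extPStepB (n : ℕ) (u w : Perm ℤ) : Prop :=
  (∃ i j : ℤ, 1 ≤ i ∧ i < j ∧ j ≤ (n : ℤ) ∧
    w = u * (Equiv.swap i (-j) * Equiv.swap j (-i)) ∧ lenB n u < lenB n w) ∨
  (∃ i : ℤ, 1 ≤ i ∧ i ≤ (n : ℤ) ∧ w = u * Equiv.swap i (-i) ∧ lenB n u < lenB n w)

/-- The extended `P`-Bruhat order on the hyperoctahedral group. -/
def extPLEB (n : ℕ) : Perm ℤ → Perm ℤ → Prop :=
  Relation.ReflTransGen (extPStepB n)


lemma IsSigned.zero {n : ℕ} {u : Perm ℤ} (hu : IsSigned n u) : u 0 = 0 := by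
  have := hu.1 0
  rw [neg_zero] at this
  omega

lemma IsSigned.ne_zero {n : ℕ} {u : Perm ℤ} (hu : IsSigned n u) {k : ℤ} (hk : k ≠ 0) :
    u k ≠ 0 := by
  intro h
  exact hk (u.injective (h.trans hu.zero.symm))

lemma IsSigned.abs_le {n : ℕ} {u : Perm ℤ} (hu : IsSigned n u) {k : ℤ} (hk : |k| ≤ n) :
    |u k| ≤ n := by
  by_contra h
  push_neg at h
  have h2 := hu.2 (u k) h
  have h3 := u.injective h2
  rw [h3] at h
  omega

lemma IsSigned.symm_abs_le {n : ℕ} {u : Perm ℤ} (hu : IsSigned n u) {v : ℤ} (hv : |v| ≤ n) :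
    |u.symm v| ≤ n := by
  by_contra h
  push_neg at h
  have h2 := hu.2 (u.symm v) h
  rw [Equiv.apply_symm_apply] at h2
  rw [← h2] at h
  omega

lemma IsSigned.symm_ne_zero {n : ℕ} {u : Perm ℤ} (hu : IsSigned n u) {v : ℤ} (hv : v ≠ 0) :
    u.symm v ≠ 0 := by
  intro h
  apply hv
  have : u (u.symm v) = u 0 := by rw [h]
  rw [Equiv.apply_symm_apply, hu.zero] at this
  exact this

lemma tau_apply {i j : ℤ} (h1 : 1 ≤ i) (hij : i < j) (k : ℤ) :
    (Equiv.swap i (-j) * Equiv.swap j (-i)) k =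
      if k = i then -j else if k = j then -i else if k = -i then j else if k = -j then i else k := by
  simp only [Perm.mul_apply, Equiv.swap_apply_def]
  split_ifs <;> omega

lemma sigma_apply {i : ℤ} (k : ℤ) :
    (Equiv.swap i (-i)) k = if k = i then -i else if k = -i then i else k := by
  rw [Equiv.swap_apply_def]

lemma tau_sq {i j : ℤ} (h1 : 1 ≤ i) (hij : i < j) :
    (Equiv.swap i (-j) * Equiv.swap j (-i)) * (Equiv.swap i (-j) * Equiv.swap j (-i)) = 1 := by
  ext k
  simp only [Perm.mul_apply, Equiv.swap_apply_def, Perm.one_apply]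
  split_ifs <;> omega

lemma sigma_sq {i : ℤ} : (Equiv.swap i (-i)) * (Equiv.swap i (-i)) = 1 := by
  rw [Equiv.swap_mul_self]

lemma IsSigned.mul_tau {n : ℕ} {u : Perm ℤ} (hu : IsSigned n u) {i j : ℤ}
    (h1 : 1 ≤ i) (hij : i < j) (hjn : j ≤ (n : ℤ)) :
    IsSigned n (u * (Equiv.swap i (-j) * Equiv.swap j (-i))) := by
  constructor
  · intro k
    have ht : (Equiv.swap i (-j) * Equiv.swap j (-i)) (-k)
        = -((Equiv.swap i (-j) * Equiv.swap j (-i)) k) := by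
      rw [tau_apply h1 hij, tau_apply h1 hij]
      split_ifs <;> omega
    have e1 : (u * (Equiv.swap i (-j) * Equiv.swap j (-i))) (-k)
        = u ((Equiv.swap i (-j) * Equiv.swap j (-i)) (-k)) := rfl
    have e2 : (u * (Equiv.swap i (-j) * Equiv.swap j (-i))) k
        = u ((Equiv.swap i (-j) * Equiv.swap j (-i)) k) := rfl
    rw [e1, e2, ht, hu.1]
  · intro k hk
    rw [lt_abs] at hk
    have ht : (Equiv.swap i (-j) * Equiv.swap j (-i)) k = k := by
      rw [tau_apply h1 hij]
      split_ifs <;> omega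
    have e1 : (u * (Equiv.swap i (-j) * Equiv.swap j (-i))) k
        = u ((Equiv.swap i (-j) * Equiv.swap j (-i)) k) := rfl
    rw [e1, ht]
    exact hu.2 k (by rw [lt_abs]; exact hk)

lemma IsSigned.mul_sigma {n : ℕ} {u : Perm ℤ} (hu : IsSigned n u) {i : ℤ}
    (h1 : 1 ≤ i) (hin : i ≤ (n : ℤ)) :
    IsSigned n (u * Equiv.swap i (-i)) := by
  constructor
  · intro k
    have ht : (Equiv.swap i (-i)) (-k) = -((Equiv.swap i (-i)) k) := by
      rw [sigma_apply, sigma_apply]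
      split_ifs <;> omega
    have e1 : (u * Equiv.swap i (-i)) (-k) = u ((Equiv.swap i (-i)) (-k)) := rfl
    have e2 : (u * Equiv.swap i (-i)) k = u ((Equiv.swap i (-i)) k) := rfl
    rw [e1, e2, ht, hu.1]
  · intro k hk
    rw [lt_abs] at hk
    have ht : (Equiv.swap i (-i)) k = k := by
      rw [sigma_apply]
      split_ifs <;> omega
    have e1 : (u * Equiv.swap i (-i)) k = u ((Equiv.swap i (-i)) k) := rfl
    rw [e1, ht]
    exact hu.2 k (by rw [lt_abs]; exact hk)

def tmap (i j : ℤ) : (ℤ × ℤ) ⊕ (ℤ × ℤ) → (ℤ × ℤ) ⊕ (ℤ × ℤ)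
  | Sum.inl (x, y) =>
      if x = i ∧ j < y then Sum.inr (j, y)
      else if x = j ∧ j < y then Sum.inr (i, y)
      else if x = i ∧ i < y ∧ y < j then Sum.inr (y, j)
      else Sum.inl (x, y)
  | Sum.inr (x, y) =>
      if x = i ∧ j < y then Sum.inl (j, y)
      else if x = j ∧ j < y then Sum.inl (i, y)
      else if y = j ∧ i < x ∧ x < j then Sum.inl (i, x)
      else Sum.inr (x, y)

lemma tmap_invol {i j : ℤ} (hij : i < j) (z : (ℤ × ℤ) ⊕ (ℤ × ℤ)) :
    tmap i j (tmap i j z) = z := by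
  rcases z with ⟨x, y⟩ | ⟨x, y⟩ <;>
    · simp only [tmap]
      split_ifs <;> simp only [tmap] <;> split_ifs <;>
        simp_all [Prod.ext_iff] <;> omega

lemma mem_setA {n : ℕ} {v : Perm ℤ} {x y : ℤ} :
    (x, y) ∈ ((Finset.Icc (1 : ℤ) n ×ˢ Finset.Icc (1 : ℤ) n).filter
      (fun p => p.1 < p.2 ∧ v p.2 < v p.1)) ↔
      (1 ≤ x ∧ x ≤ n ∧ 1 ≤ y ∧ y ≤ n ∧ x < y ∧ v y < v x) := by
  simp [Finset.mem_filter, Finset.mem_product, Finset.mem_Icc]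
  tauto

lemma mem_setB {n : ℕ} {v : Perm ℤ} {x y : ℤ} :
    (x, y) ∈ ((Finset.Icc (1 : ℤ) n ×ˢ Finset.Icc (1 : ℤ) n).filter
      (fun p => p.1 ≤ p.2 ∧ v p.1 + v p.2 < 0)) ↔
      (1 ≤ x ∧ x ≤ n ∧ 1 ≤ y ∧ y ≤ n ∧ x ≤ y ∧ v x + v y < 0) := by
  simp [Finset.mem_filter, Finset.mem_product, Finset.mem_Icc]
  tauto

lemma lenB_lt_of_t {n : ℕ} {u : Perm ℤ} (hu : IsSigned n u) {i j : ℤ}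
    (h1 : 1 ≤ i) (hij : i < j) (hjn : j ≤ (n : ℤ))
    (hsum : 0 < u i + u j) :
    lenB n u < lenB n (u * (Equiv.swap i (-j) * Equiv.swap j (-i))) := by
  set w := u * (Equiv.swap i (-j) * Equiv.swap j (-i)) with hwdef
  have hwi : w i = -(u j) := by
    have e : w i = u ((Equiv.swap i (-j) * Equiv.swap j (-i)) i) := rfl
    rw [e, tau_apply h1 hij, if_pos rfl]
    exact hu.1 j
  have hwj : w j = -(u i) := by
    have e : w j = u ((Equiv.swap i (-j) * Equiv.swap j (-i)) j) := rfl
    rw [e, tau_apply h1 hij, if_neg (by omega), if_pos rfl]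
    exact hu.1 i
  have hwk : ∀ k : ℤ, 1 ≤ k → k ≠ i → k ≠ j → w k = u k := by
    intro k hk hki hkj
    have e : w k = u ((Equiv.swap i (-j) * Equiv.swap j (-i)) k) := rfl
    rw [e, tau_apply h1 hij]
    have : (if k = i then -j else if k = j then -i else if k = -i then j
        else if k = -j then i else k) = k := by split_ifs <;> omega
    rw [this]
  -- the four finsets
  set Au := ((Finset.Icc (1 : ℤ) n ×ˢ Finset.Icc (1 : ℤ) n).filter
      (fun p => p.1 < p.2 ∧ u p.2 < u p.1)) with hAu
  set Bu := ((Finset.Icc (1 : ℤ) n ×ˢ Finset.Icc (1 : ℤ) n).filter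
      (fun p => p.1 ≤ p.2 ∧ u p.1 + u p.2 < 0)) with hBu
  set Aw := ((Finset.Icc (1 : ℤ) n ×ˢ Finset.Icc (1 : ℤ) n).filter
      (fun p => p.1 < p.2 ∧ w p.2 < w p.1)) with hAw
  set Bw := ((Finset.Icc (1 : ℤ) n ×ˢ Finset.Icc (1 : ℤ) n).filter
      (fun p => p.1 ≤ p.2 ∧ w p.1 + w p.2 < 0)) with hBw
  have key : ∀ z ∈ Au.disjSum Bu, tmap i j z ∈ (Aw.disjSum Bw).erase (Sum.inr (i, j)) := by
    intro z hz
    rcases z with ⟨x, y⟩ | ⟨x, y⟩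
    · rw [Finset.inl_mem_disjSum, hAu, mem_setA] at hz
      obtain ⟨hx1, hxn, hy1, hyn, hxy, hval⟩ := hz
      simp only [tmap]
      split_ifs with hb1 hb2 hb3
      · rw [hb1.1] at hval
        rw [Finset.mem_erase]
        refine ⟨by simp only [ne_eq, Sum.inr.injEq, Prod.mk.injEq]; omega, ?_⟩
        rw [Finset.inr_mem_disjSum, hBw, mem_setB,
          hwj, hwk y (by omega) (by omega) (by omega)]
        refine ⟨by omega, by omega, by omega, by omega, by omega, by linarith⟩
      · rw [hb2.1] at hval
        rw [Finset.mem_erase]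
        refine ⟨by simp only [ne_eq, Sum.inr.injEq, Prod.mk.injEq]; omega, ?_⟩
        rw [Finset.inr_mem_disjSum, hBw, mem_setB,
          hwi, hwk y (by omega) (by omega) (by omega)]
        refine ⟨by omega, by omega, by omega, by omega, by omega, by linarith⟩
      · rw [hb3.1] at hval
        rw [Finset.mem_erase]
        refine ⟨by simp only [ne_eq, Sum.inr.injEq, Prod.mk.injEq]; omega, ?_⟩
        rw [Finset.inr_mem_disjSum, hBw, mem_setB,
          hwj, hwk y (by omega) (by omega) (by omega)]
        refine ⟨by omega, by omega, by omega, by omega, by omega, by linarith⟩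
      · rw [Finset.mem_erase]
        refine ⟨by simp, ?_⟩
        rw [Finset.inl_mem_disjSum, hAw, mem_setA]
        refine ⟨hx1, hxn, hy1, hyn, hxy, ?_⟩
        by_cases hxi : x = i
        · -- then y = j
          have hyj : y = j := by
            rcases (lt_or_ge j y) with h | h
            · exact absurd ⟨hxi, h⟩ hb1
            · rcases (lt_or_ge y j) with h' | h'
              · exact absurd ⟨hxi, by omega, h'⟩ hb3
              · omega
          rw [hxi, hyj] at hval ⊢
          rw [hwi, hwj]
          linarith
        · by_cases hxj : x = j
          · exfalso; exact hb2 ⟨hxj, by omega⟩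
          · rw [hwk x (by omega) hxi hxj]
            by_cases hyi : y = i
            · rw [hyi] at hval ⊢
              rw [hwi]
              linarith
            · by_cases hyj : y = j
              · rw [hyj] at hval ⊢
                rw [hwj]
                linarith
              · rw [hwk y (by omega) hyi hyj]
                exact hval
    · rw [Finset.inr_mem_disjSum, hBu, mem_setB] at hz
      obtain ⟨hx1, hxn, hy1, hyn, hxy, hval⟩ := hz
      simp only [tmap]
      split_ifs with hb1 hb2 hb3
      · rw [hb1.1] at hval
        rw [Finset.mem_erase]
        refine ⟨by simp, ?_⟩
        rw [Finset.inl_mem_disjSum, hAw, mem_setA,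
          hwj, hwk y (by omega) (by omega) (by omega)]
        refine ⟨by omega, by omega, by omega, by omega, by omega, by linarith⟩
      · rw [hb2.1] at hval
        rw [Finset.mem_erase]
        refine ⟨by simp, ?_⟩
        rw [Finset.inl_mem_disjSum, hAw, mem_setA,
          hwi, hwk y (by omega) (by omega) (by omega)]
        refine ⟨by omega, by omega, by omega, by omega, by omega, by linarith⟩
      · rw [hb3.1] at hval
        rw [Finset.mem_erase]
        refine ⟨by simp, ?_⟩
        rw [Finset.inl_mem_disjSum, hAw, mem_setA,
          hwi, hwk x (by omega) (by omega) (by omega)]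
        refine ⟨by omega, by omega, by omega, by omega, by omega, by linarith⟩
      · by_cases hxi : x = i
        · -- ¬(j < y) so y ≤ j ; y ≥ x = i
          have hyj' : y ≤ j := by
            by_contra h
            exact hb1 ⟨hxi, by omega⟩
          by_cases hyj : y = j
          · exfalso
            rw [hxi, hyj] at hval
            linarith
          · rw [Finset.mem_erase]
            refine ⟨by simp only [ne_eq, Sum.inr.injEq, Prod.mk.injEq]; omega, ?_⟩
            rw [Finset.inr_mem_disjSum, hBw, mem_setB]
            refine ⟨hx1, hxn, hy1, hyn, hxy, ?_⟩
            by_cases hyi : y = i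
            · rw [hxi, hyi] at hval ⊢
              rw [hwi]
              linarith
            · rw [hxi] at hval ⊢
              rw [hwi, hwk y (by omega) hyi hyj]
              linarith
        · by_cases hxj : x = j
          · have hyj : y = j := by
              by_contra h
              rcases lt_or_ge j y with h' | h'
              · exact hb2 ⟨hxj, h'⟩
              · omega
            rw [Finset.mem_erase]
            refine ⟨by simp only [ne_eq, Sum.inr.injEq, Prod.mk.injEq]; omega, ?_⟩
            rw [Finset.inr_mem_disjSum, hBw, mem_setB]
            refine ⟨hx1, hxn, hy1, hyn, hxy, ?_⟩
            rw [hxj, hyj] at hval ⊢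
            rw [hwj]
            linarith
          · rw [Finset.mem_erase]
            refine ⟨by simp only [ne_eq, Sum.inr.injEq, Prod.mk.injEq]; omega, ?_⟩
            rw [Finset.inr_mem_disjSum, hBw, mem_setB]
            refine ⟨hx1, hxn, hy1, hyn, hxy, ?_⟩
            rw [hwk x (by omega) hxi hxj]
            by_cases hyi : y = i
            · rw [hyi] at hval ⊢
              rw [hwi]
              linarith
            · by_cases hyj : y = j
              · have hxi' : x < i := by
                  rcases lt_or_ge i x with h' | h'
                  · exfalso; exact hb3 ⟨hyj, h', by omega⟩
                  · omega
                rw [hyj] at hval ⊢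
                rw [hwj]
                linarith
              · rw [hwk y (by omega) hyi hyj]
                exact hval
  have hinj : Set.InjOn (tmap i j) (Au.disjSum Bu) :=
    (Function.LeftInverse.injective (tmap_invol hij)).injOn
  have hcard := Finset.card_le_card_of_injOn (tmap i j) key hinj
  have hmem : (Sum.inr (i, j) : (ℤ × ℤ) ⊕ (ℤ × ℤ)) ∈ Aw.disjSum Bw := by
    rw [Finset.inr_mem_disjSum, hBw, mem_setB, hwi, hwj]
    refine ⟨by omega, by omega, by omega, by omega, by omega, by linarith⟩
  have hlt := Finset.card_erase_lt_of_mem hmem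
  have e1 : lenB n u = (Au.disjSum Bu).card := by
    rw [Finset.card_disjSum]; rfl
  have e2 : lenB n w = (Aw.disjSum Bw).card := by
    rw [Finset.card_disjSum]; rfl
  rw [e1, e2]
  exact lt_of_le_of_lt hcard hlt

def smap (i : ℤ) : (ℤ × ℤ) ⊕ (ℤ × ℤ) → (ℤ × ℤ) ⊕ (ℤ × ℤ)
  | Sum.inl (x, y) => if x = i ∧ i < y then Sum.inr (x, y) else Sum.inl (x, y)
  | Sum.inr (x, y) => if x = i ∧ i < y then Sum.inl (x, y) else Sum.inr (x, y)

lemma smap_invol (i : ℤ) (z : (ℤ × ℤ) ⊕ (ℤ × ℤ)) : smap i (smap i z) = z := by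
  rcases z with ⟨x, y⟩ | ⟨x, y⟩ <;>
    · simp only [smap]
      split_ifs <;> simp only [smap] <;> split_ifs <;> simp_all

lemma lenB_lt_of_s {n : ℕ} {u : Perm ℤ} (hu : IsSigned n u) {i : ℤ}
    (h1 : 1 ≤ i) (hin : i ≤ (n : ℤ)) (hpos : 0 < u i) :
    lenB n u < lenB n (u * Equiv.swap i (-i)) := by
  set w := u * Equiv.swap i (-i) with hwdef
  have hwi : w i = -(u i) := by
    have e : w i = u ((Equiv.swap i (-i)) i) := rfl
    rw [e, sigma_apply, if_pos rfl]
    exact hu.1 i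
  have hwk : ∀ k : ℤ, 1 ≤ k → k ≠ i → w k = u k := by
    intro k hk hki
    have e : w k = u ((Equiv.swap i (-i)) k) := rfl
    rw [e, sigma_apply]
    have : (if k = i then -i else if k = -i then i else k) = k := by split_ifs <;> omega
    rw [this]
  set Au := ((Finset.Icc (1 : ℤ) n ×ˢ Finset.Icc (1 : ℤ) n).filter
      (fun p => p.1 < p.2 ∧ u p.2 < u p.1)) with hAu
  set Bu := ((Finset.Icc (1 : ℤ) n ×ˢ Finset.Icc (1 : ℤ) n).filter
      (fun p => p.1 ≤ p.2 ∧ u p.1 + u p.2 < 0)) with hBu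
  set Aw := ((Finset.Icc (1 : ℤ) n ×ˢ Finset.Icc (1 : ℤ) n).filter
      (fun p => p.1 < p.2 ∧ w p.2 < w p.1)) with hAw
  set Bw := ((Finset.Icc (1 : ℤ) n ×ˢ Finset.Icc (1 : ℤ) n).filter
      (fun p => p.1 ≤ p.2 ∧ w p.1 + w p.2 < 0)) with hBw
  have key : ∀ z ∈ Au.disjSum Bu, smap i z ∈ (Aw.disjSum Bw).erase (Sum.inr (i, i)) := by
    intro z hz
    rcases z with ⟨x, y⟩ | ⟨x, y⟩
    · rw [Finset.inl_mem_disjSum, hAu, mem_setA] at hz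
      obtain ⟨hx1, hxn, hy1, hyn, hxy, hval⟩ := hz
      simp only [smap]
      split_ifs with hb1
      · rw [hb1.1] at hval
        rw [Finset.mem_erase]
        refine ⟨by simp only [ne_eq, Sum.inr.injEq, Prod.mk.injEq]; omega, ?_⟩
        rw [Finset.inr_mem_disjSum, hBw, mem_setB]
        refine ⟨hx1, hxn, hy1, hyn, by omega, ?_⟩
        rw [hb1.1, hwi, hwk y (by omega) (by omega)]
        linarith
      · rw [Finset.mem_erase]
        refine ⟨by simp, ?_⟩
        rw [Finset.inl_mem_disjSum, hAw, mem_setA]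
        refine ⟨hx1, hxn, hy1, hyn, hxy, ?_⟩
        by_cases hxi : x = i
        · exfalso; exact hb1 ⟨hxi, by omega⟩
        · rw [hwk x (by omega) hxi]
          by_cases hyi : y = i
          · rw [hyi] at hval ⊢
            rw [hwi]
            linarith
          · rw [hwk y (by omega) hyi]
            exact hval
    · rw [Finset.inr_mem_disjSum, hBu, mem_setB] at hz
      obtain ⟨hx1, hxn, hy1, hyn, hxy, hval⟩ := hz
      simp only [smap]
      split_ifs with hb1
      · rw [hb1.1] at hval
        rw [Finset.mem_erase]
        refine ⟨by simp, ?_⟩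
        rw [Finset.inl_mem_disjSum, hAw, mem_setA]
        refine ⟨hx1, hxn, hy1, hyn, by omega, ?_⟩
        rw [hb1.1, hwi, hwk y (by omega) (by omega)]
        linarith
      · by_cases hxi : x = i
        · have hyi : y = i := by
            by_contra h
            exact hb1 ⟨hxi, by omega⟩
          exfalso
          rw [hxi, hyi] at hval
          linarith
        · rw [Finset.mem_erase]
          refine ⟨by simp only [ne_eq, Sum.inr.injEq, Prod.mk.injEq]; omega, ?_⟩
          rw [Finset.inr_mem_disjSum, hBw, mem_setB]
          refine ⟨hx1, hxn, hy1, hyn, hxy, ?_⟩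
          rw [hwk x (by omega) hxi]
          by_cases hyi : y = i
          · rw [hyi] at hval ⊢
            rw [hwi]
            linarith
          · rw [hwk y (by omega) hyi]
            exact hval
  have hinj : Set.InjOn (smap i) (Au.disjSum Bu) :=
    (Function.LeftInverse.injective (smap_invol i)).injOn
  have hcard := Finset.card_le_card_of_injOn (smap i) key hinj
  have hmem : (Sum.inr (i, i) : (ℤ × ℤ) ⊕ (ℤ × ℤ)) ∈ Aw.disjSum Bw := by
    rw [Finset.inr_mem_disjSum, hBw, mem_setB, hwi]
    refine ⟨by omega, by omega, by omega, by omega, by omega, by linarith⟩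
  have hlt := Finset.card_erase_lt_of_mem hmem
  have e1 : lenB n u = (Au.disjSum Bu).card := by
    rw [Finset.card_disjSum]; rfl
  have e2 : lenB n w = (Aw.disjSum Bw).card := by
    rw [Finset.card_disjSum]; rfl
  rw [e1, e2]
  exact lt_of_le_of_lt hcard hlt

-- new material
lemma mul_tau_apply_i {n : ℕ} {u : Perm ℤ} (hu : IsSigned n u) {i j : ℤ}
    (h1 : 1 ≤ i) (hij : i < j) :
    (u * (Equiv.swap i (-j) * Equiv.swap j (-i))) i = -(u j) := by
  have e : (u * (Equiv.swap i (-j) * Equiv.swap j (-i))) i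
      = u ((Equiv.swap i (-j) * Equiv.swap j (-i)) i) := rfl
  rw [e, tau_apply h1 hij, if_pos rfl]
  exact hu.1 j

lemma mul_tau_apply_j {n : ℕ} {u : Perm ℤ} (hu : IsSigned n u) {i j : ℤ}
    (h1 : 1 ≤ i) (hij : i < j) :
    (u * (Equiv.swap i (-j) * Equiv.swap j (-i))) j = -(u i) := by
  have e : (u * (Equiv.swap i (-j) * Equiv.swap j (-i))) j
      = u ((Equiv.swap i (-j) * Equiv.swap j (-i)) j) := rfl
  rw [e, tau_apply h1 hij, if_neg (by omega), if_pos rfl]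
  exact hu.1 i

lemma mul_tau_apply_other {u : Perm ℤ} {i j : ℤ} (h1 : 1 ≤ i) (hij : i < j)
    {k : ℤ} (hk : 1 ≤ k) (hki : k ≠ i) (hkj : k ≠ j) :
    (u * (Equiv.swap i (-j) * Equiv.swap j (-i))) k = u k := by
  have e : (u * (Equiv.swap i (-j) * Equiv.swap j (-i))) k
      = u ((Equiv.swap i (-j) * Equiv.swap j (-i)) k) := rfl
  rw [e, tau_apply h1 hij]
  have : (if k = i then -j else if k = j then -i else if k = -i then j
      else if k = -j then i else k) = k := by split_ifs <;> omega
  rw [this]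

lemma mul_sigma_apply_i {n : ℕ} {u : Perm ℤ} (hu : IsSigned n u) (i : ℤ) :
    (u * Equiv.swap i (-i)) i = -(u i) := by
  have e : (u * Equiv.swap i (-i)) i = u ((Equiv.swap i (-i)) i) := rfl
  rw [e, sigma_apply, if_pos rfl]
  exact hu.1 i

lemma mul_sigma_apply_other {u : Perm ℤ} {i k : ℤ} (h1 : 1 ≤ i) (hk : 1 ≤ k) (hki : k ≠ i) :
    (u * Equiv.swap i (-i)) k = u k := by
  have e : (u * Equiv.swap i (-i)) k = u ((Equiv.swap i (-i)) k) := rfl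
  rw [e, sigma_apply]
  have : (if k = i then -i else if k = -i then i else k) = k := by split_ifs <;> omega
  rw [this]

lemma sum_ne_zero {n : ℕ} {u : Perm ℤ} (hu : IsSigned n u) {i j : ℤ}
    (h1 : 1 ≤ i) (hij : i < j) : u i + u j ≠ 0 := by
  intro h
  have e : u i = -(u j) := by omega
  rw [← hu.1 j] at e
  have := u.injective e
  omega

lemma lenB_t_iff {n : ℕ} {u : Perm ℤ} (hu : IsSigned n u) {i j : ℤ}
    (h1 : 1 ≤ i) (hij : i < j) (hjn : j ≤ (n : ℤ)) :
    lenB n u < lenB n (u * (Equiv.swap i (-j) * Equiv.swap j (-i))) ↔ 0 < u i + u j := by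
  constructor
  · intro hlen
    by_contra hle
    push_neg at hle
    have hne := sum_ne_zero hu h1 hij
    have hneg : u i + u j < 0 := by omega
    set v := u * (Equiv.swap i (-j) * Equiv.swap j (-i)) with hv
    have hvs : IsSigned n v := hu.mul_tau h1 hij hjn
    have hvi : v i = -(u j) := mul_tau_apply_i hu h1 hij
    have hvj : v j = -(u i) := mul_tau_apply_j hu h1 hij
    have hvsum : 0 < v i + v j := by rw [hvi, hvj]; omega
    have hvt : v * (Equiv.swap i (-j) * Equiv.swap j (-i)) = u := by
      rw [hv, mul_assoc, tau_sq h1 hij, mul_one]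
    have := lenB_lt_of_t hvs h1 hij hjn hvsum
    rw [hvt] at this
    omega
  · exact lenB_lt_of_t hu h1 hij hjn

lemma lenB_s_iff {n : ℕ} {u : Perm ℤ} (hu : IsSigned n u) {i : ℤ}
    (h1 : 1 ≤ i) (hin : i ≤ (n : ℤ)) :
    lenB n u < lenB n (u * Equiv.swap i (-i)) ↔ 0 < u i := by
  constructor
  · intro hlen
    by_contra hle
    push_neg at hle
    have hne : u i ≠ 0 := hu.ne_zero (by omega)
    have hneg : u i < 0 := by omega
    set v := u * Equiv.swap i (-i) with hv
    have hvs : IsSigned n v := hu.mul_sigma h1 hin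
    have hvi : v i = -(u i) := mul_sigma_apply_i hu i
    have hvt : v * Equiv.swap i (-i) = u := by
      rw [hv, mul_assoc, Equiv.swap_mul_self, mul_one]
    have := lenB_lt_of_s hvs h1 hin (by omega)
    rw [hvt] at this
    omega
  · exact lenB_lt_of_s hu h1 hin

lemma step_mono {n : ℕ} {u u' : Perm ℤ} (hu : IsSigned n u) (h : extPStepB n u u') :
    IsSigned n u' ∧ ∀ k : ℤ, 1 ≤ k → k ≤ (n : ℤ) → u' k ≤ u k := by
  rcases h with ⟨i, j, h1, hij, hjn, heq, hlen⟩ | ⟨i, h1, hin, heq, hlen⟩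
  · subst heq
    have hsum : 0 < u i + u j := (lenB_t_iff hu h1 hij hjn).mp hlen
    refine ⟨hu.mul_tau h1 hij hjn, ?_⟩
    intro k hk1 hkn
    by_cases hki : k = i
    · rw [hki, mul_tau_apply_i hu h1 hij]; omega
    · by_cases hkj : k = j
      · rw [hkj, mul_tau_apply_j hu h1 hij]; omega
      · rw [mul_tau_apply_other h1 hij hk1 hki hkj]
  · subst heq
    have hpos : 0 < u i := (lenB_s_iff hu h1 hin).mp hlen
    refine ⟨hu.mul_sigma h1 hin, ?_⟩
    intro k hk1 hkn
    by_cases hki : k = i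
    · rw [hki, mul_sigma_apply_i hu i]; omega
    · rw [mul_sigma_apply_other h1 hk1 hki]

lemma extPLEB_mono {n : ℕ} {u w : Perm ℤ} (hu : IsSigned n u) (h : extPLEB n u w) :
    IsSigned n w ∧ ∀ k : ℤ, 1 ≤ k → k ≤ (n : ℤ) → w k ≤ u k := by
  induction h with
  | refl => exact ⟨hu, fun k _ _ => le_refl _⟩
  | tail hab hbc ih =>
      obtain ⟨hsb, hmb⟩ := ih
      obtain ⟨hsc, hmc⟩ := step_mono hsb hbc
      exact ⟨hsc, fun k hk1 hkn => le_trans (hmc k hk1 hkn) (hmb k hk1 hkn)⟩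

lemma perm_eq_of_agree {n : ℕ} {u w : Perm ℤ} (hu : IsSigned n u) (hw : IsSigned n w)
    (h : ∀ k : ℤ, 1 ≤ k → k ≤ (n : ℤ) → u k = w k) : u = w := by
  apply Equiv.ext
  intro x
  rcases lt_trichotomy x 0 with hneg | h0 | hpos
  · by_cases hx : -(n : ℤ) ≤ x
    · have hval := h (-x) (by omega) (by omega)
      have eu : u (-(-x)) = -(u (-x)) := hu.1 (-x)
      have ew : w (-(-x)) = -(w (-x)) := hw.1 (-x)
      rw [neg_neg] at eu ew
      omega
    · rw [hu.2 x (by rw [lt_abs]; omega), hw.2 x (by rw [lt_abs]; omega)]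
  · rw [h0, hu.zero, hw.zero]
  · by_cases hx : x ≤ (n : ℤ)
    · exact h x (by omega) hx
    · rw [hu.2 x (by rw [lt_abs]; omega), hw.2 x (by rw [lt_abs]; omega)]

lemma greedy {n : ℕ} {u w : Perm ℤ} (hu : IsSigned n u) (hw : IsSigned n w)
    (hdom : ∀ k : ℤ, 1 ≤ k → k ≤ (n : ℤ) → w k ≤ u k)
    (hne : ∃ k : ℤ, 1 ≤ k ∧ k ≤ (n : ℤ) ∧ u k ≠ w k) :
    ∃ u', extPStepB n u u' ∧ IsSigned n u' ∧
      (∀ k : ℤ, 1 ≤ k → k ≤ (n : ℤ) → w k ≤ u' k) ∧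
      (∑ k ∈ Finset.Icc (1 : ℤ) n, u' k) < (∑ k ∈ Finset.Icc (1 : ℤ) n, u k) := by
  classical
  have hTne : ((Finset.Icc (1 : ℤ) n).filter (fun k => u k ≠ w k)).Nonempty := by
    obtain ⟨k, h1, h2, h3⟩ := hne
    exact ⟨k, by rw [Finset.mem_filter, Finset.mem_Icc]; exact ⟨⟨h1, h2⟩, h3⟩⟩
  obtain ⟨i, hiT, hmin⟩ :=
    ((Finset.Icc (1 : ℤ) n).filter (fun k => u k ≠ w k)).exists_min_image u hTne
  rw [Finset.mem_filter, Finset.mem_Icc] at hiT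
  obtain ⟨⟨hi1, hin⟩, hiw⟩ := hiT
  have hci : w i < u i := lt_of_le_of_ne (hdom i hi1 hin) (fun h => hiw h.symm)
  have key0 : ∀ k : ℤ, 1 ≤ k → k ≤ (n : ℤ) → u k < u i → u k = w k := by
    intro k h1 h2 hlt
    by_contra h
    have : u i ≤ u k := hmin k (by rw [Finset.mem_filter, Finset.mem_Icc]; exact ⟨⟨h1, h2⟩, h⟩)
    omega
  have hune : u i ≠ 0 := hu.ne_zero (by omega)
  by_cases hb : 0 < u i
  · -- s-move at i
    have hwile : w i ≤ -(u i) := by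
      by_contra hcon
      push_neg at hcon
      have hk0v : u (u.symm (w i)) = w i := u.apply_symm_apply (w i)
      have hwine : w i ≠ 0 := hw.ne_zero (by omega)
      have hwiabs : |w i| ≤ (n : ℤ) := hw.abs_le (by rw [abs_le]; omega)
      have hk0ne : u.symm (w i) ≠ 0 := hu.symm_ne_zero hwine
      have hk0abs : |u.symm (w i)| ≤ (n : ℤ) := hu.symm_abs_le hwiabs
      rw [abs_le] at hk0abs hwiabs
      rcases lt_trichotomy (u.symm (w i)) 0 with hneg | h0 | hpos
      · have e : u (-(u.symm (w i))) = -(u (u.symm (w i))) := hu.1 (u.symm (w i))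
        rw [hk0v] at e
        have e2 : u (-(u.symm (w i))) = w (-(u.symm (w i))) :=
          key0 _ (by omega) (by omega) (by omega)
        have e3 : w (-(u.symm (w i))) = w (-i) := by rw [← e2, e, ← hw.1 i]
        have := w.injective e3
        omega
      · exact absurd h0 hk0ne
      · have e2 : u (u.symm (w i)) = w (u.symm (w i)) :=
          key0 _ (by omega) (by omega) (by omega)
        have e3 : w (u.symm (w i)) = w i := by rw [← e2, hk0v]
        have e4 := w.injective e3
        rw [e4] at hk0v
        exact hiw hk0v
    refine ⟨u * Equiv.swap i (-i),
      Or.inr ⟨i, hi1, hin, rfl, lenB_lt_of_s hu hi1 hin hb⟩,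
      hu.mul_sigma hi1 hin, ?_, ?_⟩
    · intro k hk1 hkn
      by_cases hki : k = i
      · rw [hki, mul_sigma_apply_i hu i]; omega
      · rw [mul_sigma_apply_other hi1 hk1 hki]; exact hdom k hk1 hkn
    · have hdiff : ∑ k ∈ Finset.Icc (1 : ℤ) n, (u k - (u * Equiv.swap i (-i)) k)
          = u i - (u * Equiv.swap i (-i)) i := by
        apply Finset.sum_eq_single_of_mem i (Finset.mem_Icc.mpr ⟨hi1, hin⟩)
        intro k hk hki
        rw [Finset.mem_Icc] at hk
        rw [mul_sigma_apply_other hi1 hk.1 hki]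
        ring
      rw [Finset.sum_sub_distrib, mul_sigma_apply_i hu i] at hdiff
      omega
  · -- t-move
    have hbneg : u i < 0 := by omega
    have hwine : w i ≠ 0 := hw.ne_zero (by omega)
    have hwiabs : |w i| ≤ (n : ℤ) := hw.abs_le (by rw [abs_le]; omega)
    rw [abs_le] at hwiabs
    have hj0v : u (u.symm (-(w i))) = -(w i) := u.apply_symm_apply _
    have hj0ne : u.symm (-(w i)) ≠ 0 := hu.symm_ne_zero (by omega)
    have hj0abs : |u.symm (-(w i))| ≤ (n : ℤ) := hu.symm_abs_le (by rw [abs_le]; omega)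
    rw [abs_le] at hj0abs
    have hj0pos : 0 < u.symm (-(w i)) := by
      rcases lt_trichotomy (u.symm (-(w i))) 0 with hneg | h0 | hpos
      · exfalso
        have e : u (-(u.symm (-(w i)))) = -(u (u.symm (-(w i)))) := hu.1 _
        rw [hj0v, neg_neg] at e
        have e2 : u (-(u.symm (-(w i)))) = w (-(u.symm (-(w i)))) :=
          key0 _ (by omega) (by omega) (by omega)
        have e3 : w (-(u.symm (-(w i)))) = w i := by rw [← e2, e]
        have e4 := w.injective e3
        rw [e4] at e
        rw [e] at hci
        exact lt_irrefl _ hci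
      · exact absurd h0 hj0ne
      · exact hpos
    have hj0K : u.symm (-(w i)) ∈ (Finset.Icc (1 : ℤ) n).filter
        (fun k => -(u i) < u k ∧ u k ≤ -(w i) ∧ (u k ≠ w k ∨ u k = -(w i))) := by
      rw [Finset.mem_filter, Finset.mem_Icc]
      exact ⟨⟨by omega, by omega⟩, by omega, by omega, Or.inr hj0v⟩
    obtain ⟨j, hjK, hjmin⟩ := Finset.exists_min_image _ u ⟨_, hj0K⟩
    rw [Finset.mem_filter, Finset.mem_Icc] at hjK
    obtain ⟨⟨hj1, hjn⟩, hbj, hjc, halt⟩ := hjK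
    have hijne : i ≠ j := by
      intro h
      rw [← h] at hbj
      omega
    have hwj : w j ≤ -(u i) := by
      by_contra hcon
      push_neg at hcon
      have hdomj : w j ≤ u j := hdom j hj1 hjn
      have hwjlt : w j < u j := by
        rcases halt with h | h
        · exact lt_of_le_of_ne hdomj (fun e => h e.symm)
        · rcases eq_or_lt_of_le hdomj with he | hlt
          · exfalso
            have e2 : w j = w (-i) := by rw [he, h, ← hw.1 i]
            have := w.injective e2
            omega
          · exact hlt
      have hk1v : u (u.symm (w j)) = w j := u.apply_symm_apply _
      have hwjne : w j ≠ 0 := hw.ne_zero (by omega)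
      have hwjabs : |w j| ≤ (n : ℤ) := hw.abs_le (by rw [abs_le]; omega)
      have hk1ne : u.symm (w j) ≠ 0 := hu.symm_ne_zero hwjne
      have hk1abs : |u.symm (w j)| ≤ (n : ℤ) := hu.symm_abs_le hwjabs
      rw [abs_le] at hk1abs hwjabs
      rcases lt_trichotomy (u.symm (w j)) 0 with hneg | h0 | hpos
      · have e : u (-(u.symm (w j))) = -(u (u.symm (w j))) := hu.1 _
        rw [hk1v] at e
        have e2 : u (-(u.symm (w j))) = w (-(u.symm (w j))) :=
          key0 _ (by omega) (by omega) (by omega)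
        have e3 : w (-(u.symm (w j))) = w (-j) := by rw [← e2, e, ← hw.1 j]
        have := w.injective e3
        omega
      · exact absurd h0 hk1ne
      · have hk1K : u.symm (w j) ∈ (Finset.Icc (1 : ℤ) n).filter
            (fun k => -(u i) < u k ∧ u k ≤ -(w i) ∧ (u k ≠ w k ∨ u k = -(w i))) := by
          rw [Finset.mem_filter, Finset.mem_Icc]
          refine ⟨⟨by omega, by omega⟩, by omega, by omega, Or.inl ?_⟩
          intro he
          have e2 : w (u.symm (w j)) = w j := by rw [← he, hk1v]
          have e4 := w.injective e2
          rw [e4] at hk1v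
          omega
        have := hjmin _ hk1K
        omega
    have hsum : 0 < u i + u j := by omega
    rcases lt_or_gt_of_ne hijne with hlt | hgt
    · refine ⟨u * (Equiv.swap i (-j) * Equiv.swap j (-i)),
        Or.inl ⟨i, j, hi1, hlt, hjn, rfl, lenB_lt_of_t hu hi1 hlt hjn hsum⟩,
        hu.mul_tau hi1 hlt hjn, ?_, ?_⟩
      · intro k hk1 hkn
        by_cases hki : k = i
        · rw [hki, mul_tau_apply_i hu hi1 hlt]; omega
        · by_cases hkj : k = j
          · rw [hkj, mul_tau_apply_j hu hi1 hlt]; omega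
          · rw [mul_tau_apply_other hi1 hlt hk1 hki hkj]; exact hdom k hk1 hkn
      · have hsub : ({i, j} : Finset ℤ) ⊆ Finset.Icc (1 : ℤ) n := by
          intro x hx
          rw [Finset.mem_insert, Finset.mem_singleton] at hx
          rw [Finset.mem_Icc]
          rcases hx with h | h <;> omega
        have hzero : ∀ x ∈ Finset.Icc (1 : ℤ) n, x ∉ ({i, j} : Finset ℤ) →
            u x - (u * (Equiv.swap i (-j) * Equiv.swap j (-i))) x = 0 := by
          intro x hx hnx
          rw [Finset.mem_insert, Finset.mem_singleton] at hnx
          push_neg at hnx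
          rw [Finset.mem_Icc] at hx
          rw [mul_tau_apply_other hi1 hlt hx.1 hnx.1 hnx.2]
          ring
        have e := Finset.sum_subset hsub hzero
        rw [Finset.sum_pair hijne] at e
        rw [mul_tau_apply_i hu hi1 hlt, mul_tau_apply_j hu hi1 hlt] at e
        rw [Finset.sum_sub_distrib] at e
        omega
    · refine ⟨u * (Equiv.swap j (-i) * Equiv.swap i (-j)),
        Or.inl ⟨j, i, hj1, hgt, hin, rfl, lenB_lt_of_t hu hj1 hgt hin (by omega)⟩,
        hu.mul_tau hj1 hgt hin, ?_, ?_⟩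
      · intro k hk1 hkn
        by_cases hkj : k = j
        · rw [hkj, mul_tau_apply_i hu hj1 hgt]; omega
        · by_cases hki : k = i
          · rw [hki, mul_tau_apply_j hu hj1 hgt]; omega
          · rw [mul_tau_apply_other hj1 hgt hk1 hkj hki]; exact hdom k hk1 hkn
      · have hsub : ({i, j} : Finset ℤ) ⊆ Finset.Icc (1 : ℤ) n := by
          intro x hx
          rw [Finset.mem_insert, Finset.mem_singleton] at hx
          rw [Finset.mem_Icc]
          rcases hx with h | h <;> omega
        have hzero : ∀ x ∈ Finset.Icc (1 : ℤ) n, x ∉ ({i, j} : Finset ℤ) →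
            u x - (u * (Equiv.swap j (-i) * Equiv.swap i (-j))) x = 0 := by
          intro x hx hnx
          rw [Finset.mem_insert, Finset.mem_singleton] at hnx
          push_neg at hnx
          rw [Finset.mem_Icc] at hx
          rw [mul_tau_apply_other hj1 hgt hx.1 hnx.2 hnx.1]
          ring
        have e := Finset.sum_subset hsub hzero
        rw [Finset.sum_pair hijne] at e
        rw [mul_tau_apply_i hu hj1 hgt, mul_tau_apply_j hu hj1 hgt] at e
        rw [Finset.sum_sub_distrib] at e
        omega

theorem extPLEB_iff (n : ℕ) (u w : Perm ℤ) (hu : IsSigned n u) (hw : IsSigned n w) :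
    extPLEB n u w ↔ ∀ i : ℤ, 1 ≤ i → i ≤ (n : ℤ) → w i ≤ u i := by
  constructor
  · intro h i h1 h2
    exact (extPLEB_mono hu h).2 i h1 h2
  · intro hdom
    have main : ∀ m : ℕ, ∀ v : Perm ℤ, IsSigned n v →
        (∀ k : ℤ, 1 ≤ k → k ≤ (n : ℤ) → w k ≤ v k) →
        (∑ k ∈ Finset.Icc (1 : ℤ) n, (v k - w k)).toNat ≤ m → extPLEB n v w := by
      intro m
      induction m with
      | zero =>
          intro v hv hdom' hm
          have hnn : ∀ k ∈ Finset.Icc (1 : ℤ) n, 0 ≤ v k - w k := by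
            intro k hk
            rw [Finset.mem_Icc] at hk
            have := hdom' k hk.1 hk.2
            omega
          have hge : (0 : ℤ) ≤ ∑ k ∈ Finset.Icc (1 : ℤ) n, (v k - w k) :=
            Finset.sum_nonneg hnn
          have hz : ∑ k ∈ Finset.Icc (1 : ℤ) n, (v k - w k) = 0 := by omega
          have hall := (Finset.sum_eq_zero_iff_of_nonneg hnn).mp hz
          have heq : v = w := by
            apply perm_eq_of_agree hv hw
            intro k h1 h2
            have := hall k (Finset.mem_Icc.mpr ⟨h1, h2⟩)
            omega
          rw [heq]
          exact Relation.ReflTransGen.refl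
      | succ m ih =>
          intro v hv hdom' hm
          by_cases heq : ∀ k : ℤ, 1 ≤ k → k ≤ (n : ℤ) → v k = w k
          · rw [perm_eq_of_agree hv hw heq]
            exact Relation.ReflTransGen.refl
          · push_neg at heq
            obtain ⟨k, hk1, hk2, hk3⟩ := heq
            obtain ⟨u', hstep, hsig, hdom2, hsum⟩ := greedy hv hw hdom' ⟨k, hk1, hk2, hk3⟩
            have hm' : (∑ k ∈ Finset.Icc (1 : ℤ) n, (u' k - w k)).toNat ≤ m := by
              have h1 : (0 : ℤ) ≤ ∑ k ∈ Finset.Icc (1 : ℤ) n, (u' k - w k) := by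
                apply Finset.sum_nonneg
                intro k hk
                rw [Finset.mem_Icc] at hk
                have := hdom2 k hk.1 hk.2
                omega
              have h2 : (∑ k ∈ Finset.Icc (1 : ℤ) n, (u' k - w k))
                  < (∑ k ∈ Finset.Icc (1 : ℤ) n, (v k - w k)) := by
                rw [Finset.sum_sub_distrib, Finset.sum_sub_distrib]
                omega
              omega
            exact Relation.ReflTransGen.head hstep (ih u' hsig hdom2 hm')
    exact main _ u hu hdom le_rfl
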